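/- Let K₀ be as above and fix a positive integer N. Let P_n = (1 - 1/2^{n+1}, 1/2^{n+1}) and K = K₀ ∪ {P_N}. Then the point (0,1) = P_{-1} belongs to the lamination convex hull L(K) of K, where lamination combinations for diagonal matrices are segments between points agreeing in one coordinate. -/

import Mathlib

/-- The set `K₀ ⊆ ℝ²`, identified with 2×2 diagonal matrices `diag(x,y) ↔ (x,y)`. -/
def K0 : Set (ℝ × ℝ) :=
  {(1, 0)} ∪ ⋃ n : ℕ,
    ({(1 - 3 / 2 ^ (n + 1), 1 / 2 ^ (n + 1)), (1 - 1 / 2 ^ n, 3 / 2 ^ (n + 1))} : Set (ℝ × ℝ))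

/-- `S ⊆ ℝ²` (identified with diagonal matrices) is lamination convex: whenever two points of
`S` agree in exactly one coordinate (i.e. the corresponding diagonal matrices are rank-one
connected), the segment between them is contained in `S`. -/
def LamConvexDiag (S : Set (ℝ × ℝ)) : Prop :=
  ∀ X ∈ S, ∀ Y ∈ S,
    ((X.1 = Y.1 ∧ X.2 ≠ Y.2) ∨ (X.1 ≠ Y.1 ∧ X.2 = Y.2)) → segment ℝ X Y ⊆ S

/-- The lamination convex hull of `K`. -/
def LDiag (K : Set (ℝ × ℝ)) : Set (ℝ × ℝ) :=
  ⋂₀ {S | K ⊆ S ∧ LamConvexDiag S}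

/-- The points `Pₙ = (1 - 1/2^(n+1), 1/2^(n+1))`. -/
noncomputable def Ppt (n : ℕ) : ℝ × ℝ := (1 - 1 / 2 ^ (n + 1), 1 / 2 ^ (n + 1))

lemma subset_LDiag (K : Set (ℝ × ℝ)) : K ⊆ LDiag K := by
  intro x hx S hS
  exact hS.1 hx

lemma lamConvex_LDiag (K : Set (ℝ × ℝ)) : LamConvexDiag (LDiag K) := by
  intro X hX Y hY hcond Z hZ S hS
  exact hS.2 X (hX S hS) Y (hY S hS) hcond hZ

lemma midpoint_mem_seg (X Y : ℝ × ℝ) :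
    ((X.1 + Y.1) / 2, (X.2 + Y.2) / 2) ∈ segment ℝ X Y := by
  refine ⟨1/2, 1/2, by norm_num, by norm_num, by norm_num, ?_⟩
  simp [Prod.ext_iff, Prod.smul_def, smul_eq_mul]
  constructor <;> ring

/-- The staircase points `Rₘ = (1 - 1/2^m, 1/2^m)`, so `Pₙ = R_{n+1}` and `(0,1) = R₀`. -/
noncomputable def Rpt (m : ℕ) : ℝ × ℝ := (1 - 1 / 2 ^ m, 1 / 2 ^ m)

lemma step (K : Set (ℝ × ℝ)) (hK : K0 ⊆ K) (n : ℕ)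
    (h : Rpt (n + 1) ∈ LDiag K) : Rpt n ∈ LDiag K := by
  have h2 : (2:ℝ) ^ (n + 1) ≠ 0 := by positivity
  have h2' : (2:ℝ) ^ n ≠ 0 := by positivity
  have ha : ((1 - 3 / 2 ^ (n + 1), 1 / 2 ^ (n + 1)) : ℝ × ℝ) ∈ LDiag K := by
    apply subset_LDiag K (hK _)
    exact Or.inr (Set.mem_iUnion.2 ⟨n, Or.inl rfl⟩)
  have hb : ((1 - 1 / 2 ^ n, 3 / 2 ^ (n + 1)) : ℝ × ℝ) ∈ LDiag K := by
    apply subset_LDiag K (hK _)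
    exact Or.inr (Set.mem_iUnion.2 ⟨n, Or.inr rfl⟩)
  rw [Rpt] at h ⊢
  -- Q = midpoint of a_n and P_n
  have hQ : ((1 - 1 / 2 ^ n, 1 / 2 ^ (n + 1)) : ℝ × ℝ) ∈ LDiag K := by
    have hseg := lamConvex_LDiag K _ ha _ h (by
      refine Or.inr ⟨?_, rfl⟩
      intro heq
      simp only at heq
      have : (3 : ℝ) / 2 ^ (n + 1) = 1 / 2 ^ (n + 1) := by linarith
      field_simp at this; norm_num at this)
    have e1 : ((1 - 1 / 2 ^ n, 1 / 2 ^ (n + 1)) : ℝ × ℝ) =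
        (((1 - 3 / 2 ^ (n + 1)) + (1 - 1 / 2 ^ (n + 1))) / 2,
          ((1 : ℝ) / 2 ^ (n + 1) + 1 / 2 ^ (n + 1)) / 2) := by
      simp only [Prod.mk.injEq]
      constructor <;> (rw [pow_succ]; field_simp; ring)
    rw [e1]
    exact hseg (midpoint_mem_seg _ _)
  -- R n = midpoint of Q and b_n
  have hseg := lamConvex_LDiag K _ hQ _ hb (by
    refine Or.inl ⟨rfl, ?_⟩
    intro heq
    simp only at heq
    field_simp at heq; norm_num at heq)
  have e2 : ((1 - 1 / 2 ^ n, 1 / 2 ^ n) : ℝ × ℝ) =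
      (((1 - 1 / 2 ^ n) + (1 - 1 / 2 ^ n)) / 2,
        ((1 : ℝ) / 2 ^ (n + 1) + 3 / 2 ^ (n + 1)) / 2) := by
    simp only [Prod.mk.injEq]
    constructor
    · ring
    · rw [pow_succ]; field_simp; ring
  rw [e2]
  exact hseg (midpoint_mem_seg _ _)

lemma down (K : Set (ℝ × ℝ)) (hK : K0 ⊆ K) :
    ∀ m, Rpt m ∈ LDiag K → Rpt 0 ∈ LDiag K := by
  intro m
  induction m with
  | zero => exact id
  | succ m ih => exact fun h => ih (step K hK m h)

/-- For any positive integer `N`, adding `P_N` to `K₀` forces `(0,1)` into the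
lamination convex hull. -/
theorem stmt1 (N : ℕ) (hN : 0 < N) :
    ((0 : ℝ), (1 : ℝ)) ∈ LDiag (K0 ∪ {Ppt N}) := by
  have hK : K0 ⊆ K0 ∪ {Ppt N} := Set.subset_union_left
  have hP : Rpt (N + 1) ∈ LDiag (K0 ∪ {Ppt N}) := by
    apply subset_LDiag
    exact Or.inr rfl
  have h0 := down _ hK (N + 1) hP
  simpa [Rpt] using h0
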